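/- For every fixed integer r ≥ 2 there exists a constant C = C(r) > 0 such that for all n ≥ 1 one has t^(r)(n) ≤ C · n^{2/(r+1)}; that is, for every n there exists an ordered r-matching M of size n all of whose pairs of twins have size at most C · n^{2/(r+1)}. -/

import Mathlib

/-- A (sub-)matching: a finite set of pairwise disjoint `r`-element subsets
("edges") of the linearly ordered vertex set `ℕ`. -/
def IsMatching (r : ℕ) (M : Finset (Finset ℕ)) : Prop :=
  (∀ e ∈ M, e.card = r) ∧ ∀ e ∈ M, ∀ f ∈ M, e ≠ f → Disjoint e f

/-- The vertex support of a matching: the union of its edges. -/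
def mSupport (M : Finset (Finset ℕ)) : Finset ℕ := M.sup id

/-- An ordered `r`-matching of size `n`: `n` pairwise disjoint `r`-element edges
partitioning `[rn] = {1, …, rn}`. -/
def IsOrderedMatching (r n : ℕ) (M : Finset (Finset ℕ)) : Prop :=
  IsMatching r M ∧ M.card = n ∧ mSupport M = Finset.Icc 1 (r * n)

/-- Two ordered matchings are isomorphic if some (equivalently, the unique)
order-preserving bijection between their vertex supports maps edges onto edges. -/
def MatchIso (M N : Finset (Finset ℕ)) : Prop :=
  ∃ f : ℕ → ℕ, Set.BijOn f (mSupport M : Set ℕ) (mSupport N : Set ℕ) ∧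
    (∀ x ∈ mSupport M, ∀ y ∈ mSupport M, x < y → f x < f y) ∧
    N = M.image fun e => e.image f

/-- `M` contains twins of size `k`: a pair of vertex-disjoint isomorphic
sub-matchings of `M`, each with `k` edges. -/
def HasTwins (M : Finset (Finset ℕ)) (k : ℕ) : Prop :=
  ∃ M₁ M₂ : Finset (Finset ℕ), M₁ ⊆ M ∧ M₂ ⊆ M ∧
    Disjoint (mSupport M₁) (mSupport M₂) ∧ MatchIso M₁ M₂ ∧
    M₁.card = k ∧ M₂.card = k

/-- `t(M)`: the maximum size of twins in `M`. -/
noncomputable def twinMax (M : Finset (Finset ℕ)) : ℕ := sSup {k | HasTwins M k}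

/-- `t^(r)(n)`: the minimum of `t(M)` over all ordered `r`-matchings of size `n`. -/
noncomputable def minTwins (r n : ℕ) : ℕ :=
  sInf {t | ∃ M, IsOrderedMatching r n M ∧ twinMax M = t}

/-- A permutation `π` of `[n]` has twins of length `k`: two order-isomorphic
subsequences occupying disjoint sets of positions. -/
def PermTwins {n : ℕ} (π : Equiv.Perm (Fin n)) (k : ℕ) : Prop :=
  ∃ a b : Fin k → Fin n, StrictMono a ∧ StrictMono b ∧
    (∀ i j, a i ≠ b j) ∧ ∀ i j, (π (a i) < π (a j) ↔ π (b i) < π (b j))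

/-- `τ(n)`: the largest `k` such that every permutation of `[n]` has twins of length `k`. -/
noncomputable def permTau (n : ℕ) : ℕ :=
  sSup {k | ∀ π : Equiv.Perm (Fin n), PermTwins π k}

/-- An `r`-pattern, represented by its canonical representative: an ordered
`r`-matching of size `2` (on the vertex set `[2r]`). Every isomorphism class of
ordered `r`-matchings of size `2` contains exactly one such representative. -/
def IsPattern (r : ℕ) (P : Finset (Finset ℕ)) : Prop := IsOrderedMatching r 2 P

/-- A `P`-clique: a matching all of whose pairs of (distinct) edges form the pattern `P`. -/
def IsPClique (P M : Finset (Finset ℕ)) : Prop :=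
  ∀ e ∈ M, ∀ f ∈ M, e ≠ f → MatchIso {e, f} P

/-- `L(M)`: the size of the largest sub-matching of `M` that is a `P`-clique,
over all `r`-patterns `P`. -/
noncomputable def cliqueMax (r : ℕ) (M : Finset (Finset ℕ)) : ℕ :=
  sSup {k | ∃ P, IsPattern r P ∧ ∃ M' ⊆ M, IsPClique P M' ∧ M'.card = k}

/-- `L_r(n)`: the minimum of `L(M)` over all ordered `r`-matchings of size `n`. -/
noncomputable def minClique (r n : ℕ) : ℕ :=
  sInf {l | ∃ M, IsOrderedMatching r n M ∧ cliqueMax r M = l}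


section Aux

open Finset

/-- Uniqueness of strictly monotone maps on a finset with equal images. -/
lemma strictMonoOn_finset_unique {S : Finset ℕ} {f g : ℕ → ℕ}
    (hf : ∀ x ∈ S, ∀ y ∈ S, x < y → f x < f y)
    (hg : ∀ x ∈ S, ∀ y ∈ S, x < y → g x < g y)
    (h : S.image f = S.image g) : ∀ x ∈ S, f x = g x := by
  have hf' : Set.InjOn f S := fun x hx y hy hxy => by
    by_contra hne
    rcases lt_or_gt_of_ne hne with h1 | h1
    · exact absurd hxy (ne_of_lt (hf x hx y hy h1))
    · exact absurd hxy.symm (ne_of_lt (hf y hy x hx h1))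
  have hcard : (S.image f).card = S.card := Finset.card_image_of_injOn hf'
  set T := S.image f with hT
  have hemb1 : (fun i : Fin S.card => f (S.orderEmbOfFin rfl i)) = T.orderEmbOfFin hcard := by
    apply Finset.orderEmbOfFin_unique
    · intro i; exact Finset.mem_image_of_mem f (Finset.orderEmbOfFin_mem S rfl i)
    · intro i j hij
      exact hf _ (Finset.orderEmbOfFin_mem S rfl i) _ (Finset.orderEmbOfFin_mem S rfl j)
        ((Finset.orderEmbOfFin S rfl).strictMono hij)
  have hcard2 : (S.image g).card = S.card := by rw [← h, hcard]
  have hemb2 : (fun i : Fin S.card => g (S.orderEmbOfFin rfl i)) = T.orderEmbOfFin hcard := by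
    apply Finset.orderEmbOfFin_unique
    · intro i
      show g _ ∈ T
      rw [h]
      exact Finset.mem_image_of_mem g (Finset.orderEmbOfFin_mem S rfl i)
    · intro i j hij
      exact hg _ (Finset.orderEmbOfFin_mem S rfl i) _ (Finset.orderEmbOfFin_mem S rfl j)
        ((Finset.orderEmbOfFin S rfl).strictMono hij)
  intro x hx
  have : x ∈ Set.range (S.orderEmbOfFin rfl) := by
    rw [Finset.range_orderEmbOfFin]; exact_mod_cast hx
  rcases this with ⟨i, rfl⟩
  have := congrFun hemb1 i
  have h2 := congrFun hemb2 i
  rw [this, h2]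

/-- The canonical order-preserving bijection from `S` to `T` (extended by 0). -/
noncomputable def monoMap (S T : Finset ℕ) : ℕ → ℕ := fun x =>
  if h : x ∈ S ∧ T.card = S.card then
    T.orderEmbOfFin h.2 ((S.orderIsoOfFin rfl).symm ⟨x, h.1⟩)
  else 0

lemma monoMap_mem {S T : Finset ℕ} (hc : T.card = S.card) {x : ℕ} (hx : x ∈ S) :
    monoMap S T x ∈ T := by
  rw [monoMap, dif_pos ⟨hx, hc⟩]
  exact Finset.orderEmbOfFin_mem T hc _

lemma monoMap_strictMonoOn {S T : Finset ℕ} (hc : T.card = S.card) :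
    ∀ x ∈ S, ∀ y ∈ S, x < y → monoMap S T x < monoMap S T y := by
  intro x hx y hy hxy
  rw [monoMap, dif_pos ⟨hx, hc⟩, monoMap, dif_pos ⟨hy, hc⟩]
  apply (Finset.orderEmbOfFin T hc).strictMono
  have : (⟨x, hx⟩ : {a // a ∈ S}) < ⟨y, hy⟩ := hxy
  exact (OrderIso.lt_iff_lt _).mpr this

lemma monoMap_injOn {S T : Finset ℕ} (hc : T.card = S.card) :
    Set.InjOn (monoMap S T) S := by
  intro x hx y hy hxy
  by_contra hne
  rcases lt_or_gt_of_ne hne with h1 | h1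
  · exact absurd hxy (ne_of_lt (monoMap_strictMonoOn hc x hx y hy h1))
  · exact absurd hxy.symm (ne_of_lt (monoMap_strictMonoOn hc y hy x hx h1))

lemma monoMap_image {S T : Finset ℕ} (hc : T.card = S.card) :
    S.image (monoMap S T) = T := by
  apply Finset.eq_of_subset_of_card_le
  · intro y hy
    rcases Finset.mem_image.mp hy with ⟨x, hx, rfl⟩
    exact monoMap_mem hc hx
  · rw [Finset.card_image_of_injOn (monoMap_injOn hc), hc]

lemma monoMap_inverse {S T : Finset ℕ} (hc : T.card = S.card) :
    ∀ x ∈ S, monoMap T S (monoMap S T x) = x := by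
  have hc' : S.card = T.card := hc.symm
  have hcomp : ∀ x ∈ S, ∀ y ∈ S, x < y →
      monoMap T S (monoMap S T x) < monoMap T S (monoMap S T y) := by
    intro x hx y hy hxy
    exact monoMap_strictMonoOn hc' _ (monoMap_mem hc hx) _ (monoMap_mem hc hy)
      (monoMap_strictMonoOn hc x hx y hy hxy)
  have himg : S.image (fun x => monoMap T S (monoMap S T x)) = S.image id := by
    have h1 : S.image (fun x => monoMap T S (monoMap S T x)) =
        (S.image (monoMap S T)).image (monoMap T S) := by
      rw [Finset.image_image]; rfl
    rw [Finset.image_id, h1, monoMap_image hc, monoMap_image hc']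
  have := strictMonoOn_finset_unique hcomp (by intro x hx y hy hxy; simpa using hxy) himg
  simpa using this

lemma edge_subset_support {M : Finset (Finset ℕ)} {e : Finset ℕ} (he : e ∈ M) :
    e ⊆ mSupport M := Finset.le_sup (f := id) he

lemma mSupport_mono {M N : Finset (Finset ℕ)} (h : M ⊆ N) : mSupport M ⊆ mSupport N :=
  Finset.le_iff_subset.mp (Finset.sup_mono h)

lemma mSupport_union (M N : Finset (Finset ℕ)) :
    mSupport (M ∪ N) = mSupport M ∪ mSupport N := Finset.sup_union

lemma mem_mSupport {M : Finset (Finset ℕ)} {x : ℕ} :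
    x ∈ mSupport M ↔ ∃ e ∈ M, x ∈ e := Finset.mem_sup

lemma mSupport_card {r : ℕ} {M : Finset (Finset ℕ)} (h : IsMatching r M) :
    (mSupport M).card = r * M.card := by
  have : mSupport M = M.biUnion id := Finset.sup_eq_biUnion M id
  have hcb := Finset.card_biUnion (s := M) (t := id) (fun x hx y hy hxy => h.2 x hx y hy hxy)
  rw [this, hcb]
  have : ∀ e ∈ M, #(id e) = r := fun e he => h.1 e he
  rw [Finset.sum_congr rfl this, Finset.sum_const, smul_eq_mul, mul_comm]

/-- Image of a matching under a map injective on the support. -/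
lemma support_image {M : Finset (Finset ℕ)} {g : ℕ → ℕ} :
    mSupport (M.image fun e => e.image g) = (mSupport M).image g := by
  classical
  induction M using Finset.induction with
  | empty => simp [mSupport]
  | insert _ _ h ih =>
    rw [Finset.image_insert]
    unfold mSupport at *
    rw [Finset.sup_insert, Finset.sup_insert]
    simp only [id_eq]
    rw [ih]
    show _ ∪ _ = image g (_ ∪ _)
    rw [Finset.image_union]

lemma edge_image_injOn {M : Finset (Finset ℕ)} {g : ℕ → ℕ}
    (hg : Set.InjOn g (mSupport M)) :
    Set.InjOn (fun e => e.image g) (M : Set (Finset ℕ)) := by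
  intro e he f hf hef
  simp only at hef
  apply Finset.Subset.antisymm
  · intro x hx
    have : g x ∈ f.image g := by rw [← hef]; exact Finset.mem_image_of_mem g hx
    rcases Finset.mem_image.mp this with ⟨y, hy, hxy⟩
    have : y = x := hg (edge_subset_support hf hy) (edge_subset_support he hx) hxy
    rwa [← this]
  · intro x hx
    have : g x ∈ e.image g := by rw [hef]; exact Finset.mem_image_of_mem g hx
    rcases Finset.mem_image.mp this with ⟨y, hy, hxy⟩
    have : y = x := hg (edge_subset_support he hy) (edge_subset_support hf hx) hxy
    rwa [← this]

lemma card_image_matching {M : Finset (Finset ℕ)} {g : ℕ → ℕ}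
    (hg : Set.InjOn g (mSupport M)) :
    (M.image fun e => e.image g).card = M.card :=
  Finset.card_image_of_injOn (edge_image_injOn hg)

lemma isMatching_image {r : ℕ} {M : Finset (Finset ℕ)} {g : ℕ → ℕ}
    (h : IsMatching r M) (hg : Set.InjOn g (mSupport M)) :
    IsMatching r (M.image fun e => e.image g) := by
  constructor
  · intro e he
    rcases Finset.mem_image.mp he with ⟨e', he', rfl⟩
    rw [Finset.card_image_of_injOn (hg.mono (by exact_mod_cast edge_subset_support he'))]
    exact h.1 e' he'
  · intro e he f hf hef
    rcases Finset.mem_image.mp he with ⟨e', he', rfl⟩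
    rcases Finset.mem_image.mp hf with ⟨f', hf', rfl⟩
    have hne : e' ≠ f' := fun hh => hef (by rw [hh])
    have hd := h.2 e' he' f' hf' hne
    rw [Finset.disjoint_left]
    intro a hae haf
    rcases Finset.mem_image.mp hae with ⟨x, hx, rfl⟩
    rcases Finset.mem_image.mp haf with ⟨y, hy, hxy⟩
    have : y = x := hg (edge_subset_support hf' hy) (edge_subset_support he' hx) hxy
    subst this
    exact Finset.disjoint_left.mp hd hx hy

lemma image_roundtrip {M : Finset (Finset ℕ)} {g g' : ℕ → ℕ}
    (h : ∀ x ∈ mSupport M, g' (g x) = x) :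
    ((M.image fun e => e.image g).image fun e => e.image g') = M := by
  rw [Finset.image_image]
  have : ∀ e ∈ M, ((fun e => Finset.image g' e) ∘ fun e => Finset.image g e) e = id e := by
    intro e he
    simp only [Function.comp_apply, Finset.image_image, id_eq]
    calc e.image (g' ∘ g) = e.image id :=
      Finset.image_congr (fun x hx => h x (edge_subset_support he hx))
    _ = e := Finset.image_id
  rw [Finset.image_congr this, Finset.image_id]

/-- Transport of a matching along the canonical order bijection `S → T`. -/
noncomputable def mtrans (S T : Finset ℕ) (M : Finset (Finset ℕ)) : Finset (Finset ℕ) :=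
  M.image fun e => e.image (monoMap S T)

lemma monoMap_injOn_support {S T : Finset ℕ} {M : Finset (Finset ℕ)}
    (hc : T.card = S.card) (hS : mSupport M = S) : Set.InjOn (monoMap S T) (mSupport M) := by
  rw [hS]; exact monoMap_injOn hc

lemma mtrans_isMatching {r : ℕ} {S T : Finset ℕ} {M : Finset (Finset ℕ)}
    (hc : T.card = S.card) (hS : mSupport M = S) (h : IsMatching r M) :
    IsMatching r (mtrans S T M) :=
  isMatching_image h (monoMap_injOn_support hc hS)

lemma mtrans_card {S T : Finset ℕ} {M : Finset (Finset ℕ)}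
    (hc : T.card = S.card) (hS : mSupport M = S) : (mtrans S T M).card = M.card :=
  card_image_matching (monoMap_injOn_support hc hS)

lemma mtrans_support {S T : Finset ℕ} {M : Finset (Finset ℕ)}
    (hc : T.card = S.card) (hS : mSupport M = S) : mSupport (mtrans S T M) = T := by
  rw [mtrans, support_image, hS, monoMap_image hc]

lemma mtrans_roundtrip {S T : Finset ℕ} {M : Finset (Finset ℕ)}
    (hc : T.card = S.card) (hS : mSupport M = S) : mtrans T S (mtrans S T M) = M := by
  rw [mtrans, mtrans]
  apply image_roundtrip
  rw [hS]
  exact monoMap_inverse hc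

open scoped Classical in
/-- The finset of all `r`-matchings of size `m` with support exactly `V`. -/
noncomputable def MSet (r : ℕ) (V : Finset ℕ) (m : ℕ) : Finset (Finset (Finset ℕ)) :=
  (V.powerset.powerset).filter (fun M => IsMatching r M ∧ M.card = m ∧ mSupport M = V)

lemma mem_MSet {r m : ℕ} {V : Finset ℕ} {M : Finset (Finset ℕ)} :
    M ∈ MSet r V m ↔ IsMatching r M ∧ M.card = m ∧ mSupport M = V := by
  classical
  rw [MSet, Finset.mem_filter]
  simp only [Finset.mem_powerset]
  constructor
  · tauto
  · intro h
    refine ⟨?_, h⟩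
    intro e he
    rw [Finset.mem_powerset]
    rw [← h.2.2]
    exact edge_subset_support he
  
/-- number of ordered r-matchings of size m -/
noncomputable def NM (r m : ℕ) : ℕ := (MSet r (Finset.Icc 1 (r * m)) m).card

/-- The block matching showing `MSet` is nonempty. -/
def blockM (r m : ℕ) : Finset (Finset ℕ) :=
  (Finset.range m).image fun i => Finset.Icc (r * i + 1) (r * i + r)

lemma blockM_mem {r m : ℕ} (hr : 1 ≤ r) : blockM r m ∈ MSet r (Finset.Icc 1 (r * m)) m := by
  have hdisj : ∀ i j : ℕ, i < j →
      Disjoint (Finset.Icc (r * i + 1) (r * i + r)) (Finset.Icc (r * j + 1) (r * j + r)) := by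
    intro i j hij
    rw [Finset.disjoint_left]
    intro a ha ha'
    rw [Finset.mem_Icc] at ha ha'
    have : r * (i + 1) ≤ r * j := Nat.mul_le_mul_left r hij
    rw [Nat.mul_add, mul_one] at this
    omega
  have hne : ∀ i : ℕ, r * i + 1 ∈ Finset.Icc (r * i + 1) (r * i + r) := by
    intro i; rw [Finset.mem_Icc]; omega
  have hinj : Set.InjOn (fun i => Finset.Icc (r * i + 1) (r * i + r)) (Finset.range m) := by
    intro i _ j _ hij
    by_contra hneq
    rcases Nat.lt_or_ge i j with h1 | h1
    · have hd := hdisj i j h1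
      simp only at hij
      rw [hij, disjoint_self] at hd
      have := hne j
      rw [hd] at this
      simp at this
    · have h1' : j < i := lt_of_le_of_ne h1 (Ne.symm hneq)
      have hd := hdisj j i h1'
      simp only at hij
      rw [hij, disjoint_self] at hd
      have := hne j
      rw [hd] at this
      simp at this
  rw [mem_MSet]
  refine ⟨⟨?_, ?_⟩, ?_, ?_⟩
  · intro e he
    rcases Finset.mem_image.mp he with ⟨i, _, rfl⟩
    rw [Nat.card_Icc]
    omega
  · intro e he f hf hef
    rcases Finset.mem_image.mp he with ⟨i, _, rfl⟩
    rcases Finset.mem_image.mp hf with ⟨j, _, rfl⟩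
    have hij : i ≠ j := fun h => hef (by rw [h])
    rcases Nat.lt_or_ge i j with h1 | h1
    · exact hdisj i j h1
    · exact (hdisj j i (lt_of_le_of_ne h1 (Ne.symm hij))).symm
  · rw [blockM, Finset.card_image_of_injOn hinj, Finset.card_range]
  · ext x
    rw [mem_mSupport, Finset.mem_Icc]
    constructor
    · rintro ⟨e, he, hx⟩
      rcases Finset.mem_image.mp he with ⟨i, hi, rfl⟩
      rw [Finset.mem_range] at hi
      rw [Finset.mem_Icc] at hx
      have : r * (i + 1) ≤ r * m := Nat.mul_le_mul_left r hi
      rw [Nat.mul_add, mul_one] at this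
      omega
    · rintro ⟨hx1, hx2⟩
      set i := (x - 1) / r with hi
      refine ⟨Finset.Icc (r * i + 1) (r * i + r), Finset.mem_image_of_mem _ ?_, ?_⟩
      · rw [Finset.mem_range, hi]
        rw [Nat.div_lt_iff_lt_mul (by omega : 0 < r)]
        calc x - 1 < x := by omega
        _ ≤ r * m := hx2
        _ = m * r := mul_comm r m
      · rw [Finset.mem_Icc]
        have hB : r * i ≤ x - 1 := Nat.mul_div_le (x - 1) r
        have hC : x - 1 = r * i + (x - 1) % r := by
          rw [hi]
          exact (Nat.div_add_mod (x - 1) r).symm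
        have hD : (x - 1) % r < r := Nat.mod_lt _ (by omega)
        constructor
        · calc r * i + 1 ≤ (x - 1) + 1 := Nat.add_le_add_right hB 1
          _ = x := by omega
        · calc x = (x - 1) + 1 := by omega
          _ ≤ (r * i + (r - 1)) + 1 := by
              have : (x - 1) ≤ r * i + (r - 1) := by omega
              exact Nat.add_le_add_right this 1
          _ = r * i + r := by omega

lemma MSet_nonempty {r m : ℕ} (hr : 1 ≤ r) : (MSet r (Finset.Icc 1 (r * m)) m).Nonempty :=
  ⟨blockM r m, blockM_mem hr⟩

lemma NM_pos {r m : ℕ} (hr : 1 ≤ r) : 1 ≤ NM r m :=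
  Finset.card_pos.mpr (MSet_nonempty hr)

lemma isMatching_subset {r : ℕ} {M N : Finset (Finset ℕ)} (h : IsMatching r M) (hN : N ⊆ M) :
    IsMatching r N :=
  ⟨fun e he => h.1 e (hN he), fun e he f hf hef => h.2 e (hN he) f (hN hf) hef⟩

lemma support_insert (e : Finset ℕ) (M : Finset (Finset ℕ)) :
    mSupport (insert e M) = e ∪ mSupport M := Finset.sup_insert

lemma support_disjoint_of_notmem {r : ℕ} {M : Finset (Finset ℕ)} {e : Finset ℕ}
    (h : IsMatching r M) (he : e ∈ M) {N : Finset (Finset ℕ)} (hN : N ⊆ M) (heN : e ∉ N) :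
    Disjoint e (mSupport N) := by
  rw [mSupport, Finset.disjoint_sup_right]
  intro f hf
  exact h.2 e he f (hN hf) (fun hh => heN (hh ▸ hf))

lemma support_erase_edge {r : ℕ} {M : Finset (Finset ℕ)} {e : Finset ℕ}
    (h : IsMatching r M) (he : e ∈ M) :
    mSupport (M.erase e) = mSupport M \ e := by
  have hd : Disjoint e (mSupport (M.erase e)) :=
    support_disjoint_of_notmem h he (Finset.erase_subset e M) (Finset.notMem_erase e M)
  have h3 : mSupport M = e ∪ mSupport (M.erase e) := by
    conv_lhs => rw [← Finset.insert_erase he]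
    exact support_insert e (M.erase e)
  rw [h3, Finset.union_sdiff_cancel_left hd]

/-- The edge of `M` containing `t` (if any). -/
noncomputable def topEdge (t : ℕ) (M : Finset (Finset ℕ)) : Finset ℕ :=
  if h : ∃ e ∈ M, t ∈ e then h.choose else ∅

lemma topEdge_spec {t : ℕ} {M : Finset (Finset ℕ)} (h : ∃ e ∈ M, t ∈ e) :
    topEdge t M ∈ M ∧ t ∈ topEdge t M := by
  rw [topEdge, dif_pos h]
  exact ⟨h.choose_spec.1, h.choose_spec.2⟩

lemma NM_succ_le {r m : ℕ} (hr : 1 ≤ r) :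
    NM r (m + 1) ≤ (r * m + r - 1).choose (r - 1) * NM r m := by
  classical
  set top := r * m + r with htop
  set I1 := Finset.Icc 1 (r * m + r) with hI1
  set I0 := Finset.Icc 1 (r * m) with hI0
  have hNM1 : NM r (m + 1) = (MSet r I1 (m + 1)).card := by
    rw [NM, Nat.mul_succ]
  have hcard1 : I1.card = r * m + r := by rw [hI1, Nat.card_Icc]; omega
  have hcard0 : I0.card = r * m := by rw [hI0, Nat.card_Icc]; omega
  set Φ : Finset (Finset ℕ) → Finset ℕ × Finset (Finset ℕ) := fun M =>
    ((topEdge top M).erase top,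
      mtrans (I1 \ topEdge top M) I0 (M.erase (topEdge top M))) with hΦ
  have key : ∀ M ∈ MSet r I1 (m + 1),
      (∃ e ∈ M, top ∈ e) ∧
      Φ M ∈ (Finset.powersetCard (r - 1) (Finset.Icc 1 (r * m + r - 1))) ×ˢ MSet r I0 m ∧
      M = insert (insert top (Φ M).1)
        (mtrans I0 (I1 \ insert top (Φ M).1) (Φ M).2) := by
    intro M hM
    rw [mem_MSet] at hM
    obtain ⟨hmatch, hcard, hsupp⟩ := hM
    have hex : ∃ e ∈ M, top ∈ e := by
      rw [← mem_mSupport, hsupp, hI1, Finset.mem_Icc]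
      omega
    obtain ⟨heM, hte⟩ := topEdge_spec hex
    set e := topEdge top M with he
    have hesub : e ⊆ I1 := hsupp ▸ edge_subset_support heM
    have hecard : e.card = r := hmatch.1 e heM
    have hsupp_erase : mSupport (M.erase e) = I1 \ e := by
      rw [support_erase_edge hmatch heM, hsupp]
    have hcard_sdiff : (I1 \ e).card = r * m := by
      rw [Finset.card_sdiff_of_subset hesub, hcard1, hecard]; omega
    have hc : I0.card = (I1 \ e).card := by rw [hcard0, hcard_sdiff]
    have hmatch_erase : IsMatching r (M.erase e) :=
      isMatching_subset hmatch (Finset.erase_subset e M)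
    have hΦ2 : (Φ M).2 ∈ MSet r I0 m := by
      rw [mem_MSet]
      refine ⟨mtrans_isMatching hc hsupp_erase hmatch_erase, ?_, mtrans_support hc hsupp_erase⟩
      rw [mtrans_card hc hsupp_erase, Finset.card_erase_of_mem heM, hcard]
      omega
    have hΦ1 : (Φ M).1 ∈ Finset.powersetCard (r - 1) (Finset.Icc 1 (r * m + r - 1)) := by
      rw [Finset.mem_powersetCard]
      constructor
      · intro x hx
        have hx1 := Finset.mem_of_mem_erase hx
        have hx2 := Finset.ne_of_mem_erase hx
        have := hesub hx1
        rw [hI1, Finset.mem_Icc] at this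
        rw [Finset.mem_Icc]
        omega
      · rw [Finset.card_erase_of_mem hte, hecard]
    refine ⟨hex, Finset.mem_product.mpr ⟨hΦ1, hΦ2⟩, ?_⟩
    have h1 : insert top (Φ M).1 = e := Finset.insert_erase hte
    rw [h1]
    have h2 : mtrans I0 (I1 \ e) (Φ M).2 = M.erase e := by
      show mtrans I0 (I1 \ e) (mtrans (I1 \ e) I0 (M.erase e)) = M.erase e
      exact mtrans_roundtrip hc hsupp_erase
    rw [h2, Finset.insert_erase heM]
  have hinj : Set.InjOn Φ (MSet r I1 (m + 1)) := by
    intro M hM M' hM' heq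
    have k1 := (key M hM).2.2
    have k2 := (key M' hM').2.2
    rw [k1, k2, heq]
  calc NM r (m + 1) = (MSet r I1 (m + 1)).card := hNM1
    _ ≤ ((Finset.powersetCard (r - 1) (Finset.Icc 1 (r * m + r - 1))) ×ˢ MSet r I0 m).card :=
        Finset.card_le_card_of_injOn Φ (fun M hM => (key M hM).2.1) hinj
    _ = (r * m + r - 1).choose (r - 1) * NM r m := by
        rw [Finset.card_product, Finset.card_powersetCard, Nat.card_Icc, NM]
        simp [hI0]

lemma le_NM_succ {r m : ℕ} (hr : 1 ≤ r) :
    (r * m + r - 1).choose (r - 1) * NM r m ≤ NM r (m + 1) := by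
  classical
  set top := r * m + r with htop
  set I1 := Finset.Icc 1 (r * m + r) with hI1
  set I0 := Finset.Icc 1 (r * m) with hI0
  have hNM1 : NM r (m + 1) = (MSet r I1 (m + 1)).card := by
    rw [NM, Nat.mul_succ]
  have hcard1 : I1.card = r * m + r := by rw [hI1, Nat.card_Icc]; omega
  have hcard0 : I0.card = r * m := by rw [hI0, Nat.card_Icc]; omega
  set Ψ : Finset ℕ × Finset (Finset ℕ) → Finset (Finset ℕ) := fun p =>
    insert (insert top p.1) (mtrans I0 (I1 \ insert top p.1) p.2) with hΨ
  set D := (Finset.powersetCard (r - 1) (Finset.Icc 1 (r * m + r - 1))) ×ˢ MSet r I0 m with hD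
  have key : ∀ p ∈ D, Ψ p ∈ MSet r I1 (m + 1) ∧
      (insert top p.1) ∈ Ψ p ∧ top ∈ insert top p.1 ∧
      (Ψ p).erase (insert top p.1) = mtrans I0 (I1 \ insert top p.1) p.2 := by
    rintro ⟨s, R⟩ hp
    rw [hD, Finset.mem_product] at hp
    obtain ⟨hs, hR⟩ := hp
    rw [Finset.mem_powersetCard] at hs
    rw [mem_MSet] at hR
    obtain ⟨hRmatch, hRcard, hRsupp⟩ := hR
    have htops : top ∉ s := by
      intro hmem
      have := hs.1 hmem
      rw [Finset.mem_Icc] at this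
      omega
    set e := insert top s with he
    have hecard : e.card = r := by
      rw [he, Finset.card_insert_of_notMem htops, hs.2]
      omega
    have hesub : e ⊆ I1 := by
      intro x hx
      rw [he, Finset.mem_insert] at hx
      rcases hx with rfl | hx
      · rw [hI1, Finset.mem_Icc]; omega
      · have := hs.1 hx
        rw [Finset.mem_Icc] at this
        rw [hI1, Finset.mem_Icc]
        omega
    have hcard_sdiff : (I1 \ e).card = r * m := by
      rw [Finset.card_sdiff_of_subset hesub, hcard1, hecard]; omega
    have hc : (I1 \ e).card = I0.card := by rw [hcard0, hcard_sdiff]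
    set X := mtrans I0 (I1 \ e) R with hX
    have hXmatch : IsMatching r X := mtrans_isMatching hc hRsupp hRmatch
    have hXcard : X.card = m := (mtrans_card hc hRsupp).trans hRcard
    have hXsupp : mSupport X = I1 \ e := mtrans_support hc hRsupp
    have htopnot : top ∉ I1 \ e := by
      rw [Finset.mem_sdiff]
      intro ⟨_, h2⟩
      exact h2 (Finset.mem_insert_self top s)
    have heX : e ∉ X := by
      intro hmem
      have := edge_subset_support hmem
      rw [hXsupp] at this
      exact htopnot (this (Finset.mem_insert_self top s))
    refine ⟨?_, Finset.mem_insert_self _ _, Finset.mem_insert_self _ _, ?_⟩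
    · rw [mem_MSet]
      refine ⟨⟨?_, ?_⟩, ?_, ?_⟩
      · intro f hf
        rw [hΨ, Finset.mem_insert] at hf
        rcases hf with rfl | hf
        · exact hecard
        · exact hXmatch.1 f hf
      · intro f hf g hg hfg
        simp only [hΨ, Finset.mem_insert] at hf hg
        rcases hf with rfl | hf
        · rcases hg with rfl | hg
          · exact absurd rfl hfg
          · rw [Finset.disjoint_left]
            intro a haf hag
            have := edge_subset_support hg
            rw [hXsupp] at this
            have := this hag
            rw [Finset.mem_sdiff] at this
            exact this.2 haf
        · rcases hg with rfl | hg
          · rw [Finset.disjoint_right]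
            intro a hag haf
            have := edge_subset_support hf
            rw [hXsupp] at this
            have := this haf
            rw [Finset.mem_sdiff] at this
            exact this.2 hag
          · exact hXmatch.2 f hf g hg hfg
      · rw [hΨ]
        show (insert e X).card = m + 1
        rw [Finset.card_insert_of_notMem heX, hXcard]
      · rw [hΨ]
        show mSupport (insert e X) = I1
        rw [support_insert, hXsupp, Finset.union_sdiff_of_subset hesub]
    · rw [hΨ]
      show (insert e X).erase e = X
      exact Finset.erase_insert heX
  have hinj : Set.InjOn Ψ (D : Set (Finset ℕ × Finset (Finset ℕ))) := by
    rintro ⟨s, R⟩ hp ⟨s', R'⟩ hp' heq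
    obtain ⟨hmem, hein, htin, herase⟩ := key _ hp
    obtain ⟨hmem', hein', htin', herase'⟩ := key _ hp'
    rw [Finset.mem_coe, Finset.mem_product, Finset.mem_powersetCard] at hp hp'
    have htops : top ∉ s := fun hmem => by
      have := hp.1.1 hmem; rw [Finset.mem_Icc] at this; omega
    have htops' : top ∉ s' := fun hmem => by
      have := hp'.1.1 hmem; rw [Finset.mem_Icc] at this; omega
    have hRsupp : mSupport R = I0 := (mem_MSet.mp hp.2).2.2
    have hRsupp' : mSupport R' = I0 := (mem_MSet.mp hp'.2).2.2
    -- first, insert top s = insert top s'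
    have hee : insert top s = insert top s' := by
      have h1 : insert top s ∈ Ψ (s', R') := heq ▸ hein
      simp only [hΨ, Finset.mem_insert] at h1
      rcases h1 with h1 | h1
      · exact h1
      · exfalso
        have hX'supp := mtrans_support (M := R') (S := I0) (T := I1 \ insert top s') ?_ hRsupp'
        · have := edge_subset_support h1
          rw [hX'supp] at this
          have := this (Finset.mem_insert_self top s)
          rw [Finset.mem_sdiff] at this
          exact this.2 (Finset.mem_insert_self top s')
        · rw [Finset.card_sdiff_of_subset, hcard1, hcard0]
          · have : (insert top s').card = r := by
              rw [Finset.card_insert_of_notMem htops', hp'.1.2]; omega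
            rw [this]
            omega
          · intro x hx
            rw [Finset.mem_insert] at hx
            rcases hx with rfl | hx
            · rw [hI1, Finset.mem_Icc]; omega
            · have := hp'.1.1 hx
              rw [Finset.mem_Icc] at this
              rw [hI1, Finset.mem_Icc]
              omega
    have hss : s = s' := by
      have h1 : (insert top s).erase top = (insert top s').erase top := by rw [hee]
      rwa [Finset.erase_insert htops, Finset.erase_insert htops'] at h1
    have hXX : mtrans I0 (I1 \ insert top s) R = mtrans I0 (I1 \ insert top s') R' := by
      rw [← herase, ← herase', heq, hee]
    have hcs : (I1 \ insert top s).card = I0.card := by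
      rw [Finset.card_sdiff_of_subset, hcard1, hcard0]
      · have : (insert top s).card = r := by
          rw [Finset.card_insert_of_notMem htops, hp.1.2]; omega
        rw [this]; omega
      · intro x hx
        rw [Finset.mem_insert] at hx
        rcases hx with rfl | hx
        · rw [hI1, Finset.mem_Icc]; omega
        · have := hp.1.1 hx
          rw [Finset.mem_Icc] at this
          rw [hI1, Finset.mem_Icc]
          omega
    have hRR : R = R' := by
      have h1 := mtrans_roundtrip (S := I0) (T := I1 \ insert top s) hcs hRsupp
      have h2 := mtrans_roundtrip (S := I0) (T := I1 \ insert top s') (hss ▸ hcs) hRsupp'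
      rw [← h1, ← h2, hXX, hss]
    rw [hss, hRR]
  calc (r * m + r - 1).choose (r - 1) * NM r m
      = D.card := by
        rw [hD, Finset.card_product, Finset.card_powersetCard, Nat.card_Icc, NM]
        simp [hI0]
    _ ≤ (MSet r I1 (m + 1)).card :=
        Finset.card_le_card_of_injOn Ψ (fun p hp => (key p hp).1) hinj
    _ = NM r (m + 1) := hNM1.symm

lemma pow_le_descFactorial (n : ℕ) : ∀ j : ℕ, (n + 1 - j) ^ j ≤ n.descFactorial j := by
  intro j
  induction j with
  | zero => simp
  | succ j ih =>
    rw [Nat.descFactorial_succ]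
    calc (n + 1 - (j + 1)) ^ (j + 1) = (n - j) * (n - j) ^ j := by
          have h : n + 1 - (j + 1) = n - j := by omega
          rw [h, pow_succ, mul_comm]
      _ ≤ (n - j) * (n + 1 - j) ^ j :=
          Nat.mul_le_mul_left _ (Nat.pow_le_pow_left (by omega) j)
      _ ≤ (n - j) * n.descFactorial j := Nat.mul_le_mul_left _ ih

lemma choose_le_pow' (n j : ℕ) : n.choose j ≤ n ^ j := by
  calc n.choose j ≤ j.factorial * n.choose j := Nat.le_mul_of_pos_left _ (Nat.factorial_pos j)
    _ = n.descFactorial j := (Nat.descFactorial_eq_factorial_mul_choose n j).symm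
    _ ≤ n ^ j := Nat.descFactorial_le_pow n j

lemma NM_zero_le (r : ℕ) : NM r 0 ≤ 1 := by
  rw [NM]
  apply Finset.card_le_one.mpr
  intro a ha b hb
  rw [mem_MSet] at ha hb
  rw [Finset.card_eq_zero.mp ha.2.1, Finset.card_eq_zero.mp hb.2.1]

lemma NM_le_pow {r k : ℕ} (hr : 1 ≤ r) : ∀ m, m ≤ k → NM r m ≤ (r * k) ^ ((r - 1) * m) := by
  intro m
  induction m with
  | zero => intro _; simpa using NM_zero_le r
  | succ m ih =>
    intro hm
    have h1 : NM r m ≤ (r * k) ^ ((r - 1) * m) := ih (by omega)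
    calc NM r (m + 1) ≤ (r * m + r - 1).choose (r - 1) * NM r m := NM_succ_le hr
      _ ≤ (r * m + r - 1) ^ (r - 1) * NM r m :=
          Nat.mul_le_mul_right _ (choose_le_pow' _ _)
      _ ≤ (r * k) ^ (r - 1) * (r * k) ^ ((r - 1) * m) := by
          apply Nat.mul_le_mul _ h1
          apply Nat.pow_le_pow_left
          have : r * (m + 1) ≤ r * k := Nat.mul_le_mul_left r hm
          rw [Nat.mul_succ] at this
          omega
      _ = (r * k) ^ ((r - 1) * (m + 1)) := by
          rw [← pow_add, Nat.mul_succ, Nat.add_comm ((r-1)*m) (r-1)]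

lemma NM_ratio {r : ℕ} (hr : 1 ≤ r) (s : ℕ) :
    ∀ t : ℕ, (r * s + 1) ^ ((r - 1) * t) * NM r s ≤ ((r - 1).factorial) ^ t * NM r (s + t) := by
  intro t
  induction t with
  | zero => simp
  | succ t ih =>
    have hstep : (r * s + 1) ^ (r - 1) * NM r (s + t) ≤ (r - 1).factorial * NM r (s + t + 1) := by
      calc (r * s + 1) ^ (r - 1) * NM r (s + t)
          ≤ (r * (s + t) + 1) ^ (r - 1) * NM r (s + t) := by
            apply Nat.mul_le_mul_right
            apply Nat.pow_le_pow_left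
            have : r * s ≤ r * (s + t) := Nat.mul_le_mul_left r (by omega)
            omega
        _ ≤ (r * (s + t) + r - 1).descFactorial (r - 1) * NM r (s + t) := by
            apply Nat.mul_le_mul_right
            have := pow_le_descFactorial (r * (s + t) + r - 1) (r - 1)
            have heq : r * (s + t) + r - 1 + 1 - (r - 1) = r * (s + t) + 1 := by omega
            rwa [heq] at this
        _ = (r - 1).factorial * ((r * (s + t) + r - 1).choose (r - 1) * NM r (s + t)) := by
            rw [Nat.descFactorial_eq_factorial_mul_choose, mul_assoc]
        _ ≤ (r - 1).factorial * NM r (s + t + 1) :=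
            Nat.mul_le_mul_left _ (le_NM_succ hr)
    calc (r * s + 1) ^ ((r - 1) * (t + 1)) * NM r s
        = (r * s + 1) ^ (r - 1) * ((r * s + 1) ^ ((r - 1) * t) * NM r s) := by
          rw [← mul_assoc, ← pow_add, Nat.mul_succ, Nat.add_comm ((r-1)*t) (r-1)]
      _ ≤ (r * s + 1) ^ (r - 1) * (((r - 1).factorial) ^ t * NM r (s + t)) :=
          Nat.mul_le_mul_left _ ih
      _ = ((r - 1).factorial) ^ t * ((r * s + 1) ^ (r - 1) * NM r (s + t)) := by ring
      _ ≤ ((r - 1).factorial) ^ t * ((r - 1).factorial * NM r (s + t + 1)) :=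
          Nat.mul_le_mul_left _ hstep
      _ = ((r - 1).factorial) ^ (t + 1) * NM r (s + t + 1) := by ring

lemma mSupport_empty : mSupport (∅ : Finset (Finset ℕ)) = ∅ := rfl

lemma hasTwins_zero (M : Finset (Finset ℕ)) : HasTwins M 0 := by
  refine ⟨∅, ∅, Finset.empty_subset M, Finset.empty_subset M, by simp [mSupport_empty], ?_,
    Finset.card_empty, Finset.card_empty⟩
  refine ⟨id, ?_, by simp, by simp⟩
  rw [mSupport_empty]
  simp

lemma matchIso_image_eq {M N : Finset (Finset ℕ)} {f : ℕ → ℕ}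
    (hbij : Set.BijOn f (mSupport M : Set ℕ) (mSupport N : Set ℕ)) :
    (mSupport M).image f = mSupport N := by
  apply Finset.coe_injective
  rw [Finset.coe_image]
  exact hbij.image_eq

lemma matchIso_card {M N : Finset (Finset ℕ)} {f : ℕ → ℕ}
    (hbij : Set.BijOn f (mSupport M : Set ℕ) (mSupport N : Set ℕ)) :
    (mSupport N).card = (mSupport M).card := by
  rw [← matchIso_image_eq hbij]
  exact Finset.card_image_of_injOn hbij.injOn

/-- Rigidity: an isomorphism of matchings is given by the canonical monotone map. -/
lemma matchIso_eq_mtrans {M N : Finset (Finset ℕ)} (h : MatchIso M N) :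
    N = mtrans (mSupport M) (mSupport N) M := by
  obtain ⟨f, hbij, hmono, heq⟩ := h
  have hcard : (mSupport N).card = (mSupport M).card := matchIso_card hbij
  have himg : (mSupport M).image f = mSupport N := matchIso_image_eq hbij
  have huniq : ∀ x ∈ mSupport M, f x = monoMap (mSupport M) (mSupport N) x :=
    strictMonoOn_finset_unique hmono (monoMap_strictMonoOn hcard)
      (himg.trans (monoMap_image hcard).symm)
  have key : M.image (fun e => e.image f) = mtrans (mSupport M) (mSupport N) M := by
    apply Finset.image_congr
    intro e he
    exact Finset.image_congr (fun x hx => huniq x (edge_subset_support he hx))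
  exact heq.trans key

lemma mtrans_comp {S T U : Finset ℕ} {M : Finset (Finset ℕ)}
    (hts : T.card = S.card) (hus : U.card = T.card) (hS : mSupport M = S) :
    mtrans T U (mtrans S T M) = mtrans S U M := by
  have hus' : U.card = S.card := hus.trans hts
  have hcomp : ∀ x ∈ S, monoMap T U (monoMap S T x) = monoMap S U x := by
    apply strictMonoOn_finset_unique
    · intro x hx y hy hxy
      exact monoMap_strictMonoOn hus _ (monoMap_mem hts hx) _ (monoMap_mem hts hy)
        (monoMap_strictMonoOn hts x hx y hy hxy)
    · exact monoMap_strictMonoOn hus'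
    · have h1 : S.image (fun x => monoMap T U (monoMap S T x)) =
          (S.image (monoMap S T)).image (monoMap T U) := by
        rw [Finset.image_image]; rfl
      rw [h1, monoMap_image hts, monoMap_image hus, monoMap_image hus']
  rw [mtrans, mtrans, mtrans, Finset.image_image]
  apply Finset.image_congr
  intro e he
  show (e.image (monoMap S T)).image (monoMap T U) = _
  rw [Finset.image_image]
  exact Finset.image_congr (fun x hx => hcomp x (hS ▸ edge_subset_support he hx))

lemma hasTwins_le {M : Finset (Finset ℕ)} {j k : ℕ} (hjk : k ≤ j) (h : HasTwins M j) :
    HasTwins M k := by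
  obtain ⟨M₁, M₂, h1, h2, hd, ⟨f, hbij, hmono, heq⟩, hc1, hc2⟩ := h
  obtain ⟨M₁', hsub, hcard'⟩ := Finset.exists_subset_card_eq (hc1 ▸ hjk : k ≤ M₁.card)
  set M₂' := M₁'.image (fun e => e.image f) with hM₂'
  have hsupmono : mSupport M₁' ⊆ mSupport M₁ := mSupport_mono hsub
  have hinj : Set.InjOn f (mSupport M₁') := hbij.injOn.mono (by exact_mod_cast hsupmono)
  have hsub2 : M₂' ⊆ M₂ := heq ▸ Finset.image_subset_image hsub
  have hsupp2 : mSupport M₂' = (mSupport M₁').image f := support_image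
  refine ⟨M₁', M₂', hsub.trans h1, hsub2.trans h2, ?_, ?_, hcard', ?_⟩
  · exact hd.mono hsupmono (mSupport_mono hsub2)
  · refine ⟨f, ?_, ?_, rfl⟩
    · have := hinj.bijOn_image
      rwa [hsupp2, Finset.coe_image]
    · intro x hx y hy hxy
      exact hmono x (hsupmono hx) y (hsupmono hy) hxy
  · rw [hM₂', card_image_matching hinj, hcard']

lemma hasTwins_card_le {M : Finset (Finset ℕ)} {k : ℕ} (h : HasTwins M k) : k ≤ M.card := by
  obtain ⟨M₁, _, h1, _, _, _, hc1, _⟩ := h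
  rw [← hc1]
  exact Finset.card_le_card h1

lemma twinMax_le_card (M : Finset (Finset ℕ)) : twinMax M ≤ M.card :=
  csSup_le ⟨0, by exact hasTwins_zero M⟩ (fun _ hj => hasTwins_card_le hj)

lemma twinMax_le_of_not {M : Finset (Finset ℕ)} {k : ℕ} (hk : 1 ≤ k)
    (h : ¬ HasTwins M k) : twinMax M ≤ k - 1 := by
  apply csSup_le ⟨0, by exact hasTwins_zero M⟩
  intro j hj
  by_contra hc
  push_neg at hc
  exact h (hasTwins_le (by omega) hj)

lemma minTwins_le {r n : ℕ} {M : Finset (Finset ℕ)} (h : IsOrderedMatching r n M) :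
    minTwins r n ≤ twinMax M :=
  Nat.sInf_le ⟨M, h, rfl⟩

lemma isOrderedMatching_iff {r n : ℕ} {M : Finset (Finset ℕ)} :
    IsOrderedMatching r n M ↔ M ∈ MSet r (Finset.Icc 1 (r * n)) n := by
  rw [mem_MSet, IsOrderedMatching]

lemma support_disjoint_sub {r : ℕ} {M M' M'' : Finset (Finset ℕ)} (h : IsMatching r M)
    (h' : M' ⊆ M) (h'' : M'' ⊆ M) (hd : Disjoint M' M'') :
    Disjoint (mSupport M') (mSupport M'') := by
  rw [mSupport, mSupport, Finset.disjoint_sup_right]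
  intro f hf
  rw [Finset.disjoint_sup_left]
  intro e he
  refine h.2 e (h' he) f (h'' hf) ?_
  rintro rfl
  exact (Finset.disjoint_left.mp hd) he hf

open scoped Classical in
lemma card_bad_le {r n k : ℕ} (hr : 1 ≤ r) (hkn : 2 * k ≤ n) :
    ((MSet r (Finset.Icc 1 (r * n)) n).filter (fun M => HasTwins M k)).card ≤
      NM r k * ((r * n).choose (r * k) * ((r * n).choose (r * k) * NM r (n - 2 * k))) := by
  classical
  set In := Finset.Icc 1 (r * n) with hIn
  set K1 := Finset.Icc 1 (r * k) with hK1
  set K2 := Finset.Icc 1 (r * (n - 2 * k)) with hK2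
  have hIncard : In.card = r * n := by rw [hIn, Nat.card_Icc]; omega
  have hK1card : K1.card = r * k := by rw [hK1, Nat.card_Icc]; omega
  have hK2card : K2.card = r * (n - 2 * k) := by rw [hK2, Nat.card_Icc]; omega
  set Bad := (MSet r In n).filter (fun M => HasTwins M k) with hBad
  set T := MSet r K1 k ×ˢ (Finset.powersetCard (r * k) In ×ˢ
    (Finset.powersetCard (r * k) In ×ˢ MSet r K2 (n - 2 * k))) with hT
  set Φ : Finset (Finset ℕ) → Finset (Finset ℕ) × Finset ℕ × Finset ℕ × Finset (Finset ℕ) :=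
    fun M => if h : HasTwins M k then
      (mtrans (mSupport h.choose) K1 h.choose, mSupport h.choose,
       mSupport h.choose_spec.choose,
       mtrans (In \ (mSupport h.choose ∪ mSupport h.choose_spec.choose)) K2
         (M \ (h.choose ∪ h.choose_spec.choose)))
    else (∅, ∅, ∅, ∅) with hΦ
  set recon : Finset (Finset ℕ) × Finset ℕ × Finset ℕ × Finset (Finset ℕ) →
      Finset (Finset ℕ) := fun p =>
    (mtrans K1 p.2.1 p.1 ∪ mtrans K1 p.2.2.1 p.1) ∪
      mtrans K2 (In \ (p.2.1 ∪ p.2.2.1)) p.2.2.2 with hrecon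
  have key : ∀ M ∈ Bad, Φ M ∈ T ∧ M = recon (Φ M) := by
    intro M hMBad
    rw [hBad, Finset.mem_filter] at hMBad
    obtain ⟨hMmem, htw⟩ := hMBad
    rw [mem_MSet] at hMmem
    obtain ⟨hmatch, hcard, hsupp⟩ := hMmem
    set M₁ := htw.choose with hM₁
    set M₂ := htw.choose_spec.choose with hM₂
    obtain ⟨hsub1, hsub2, hd, hiso, hc1, hc2⟩ := htw.choose_spec.choose_spec
    have hΦM : Φ M = (mtrans (mSupport M₁) K1 M₁, mSupport M₁, mSupport M₂,
        mtrans (In \ (mSupport M₁ ∪ mSupport M₂)) K2 (M \ (M₁ ∪ M₂))) := by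
      rw [hΦ]
      simp only [dif_pos htw]
      rfl
    set A := mSupport M₁ with hA
    set B := mSupport M₂ with hB
    set V := In \ (A ∪ B) with hV
    set rest := M \ (M₁ ∪ M₂) with hrest
    have hm1 : IsMatching r M₁ := isMatching_subset hmatch hsub1
    have hm2 : IsMatching r M₂ := isMatching_subset hmatch hsub2
    have hmrest : IsMatching r rest :=
      isMatching_subset hmatch (Finset.sdiff_subset)
    have hAcard : A.card = r * k := by rw [hA, mSupport_card hm1, hc1]
    have hBcard : B.card = r * k := by rw [hB, mSupport_card hm2, hc2]
    have hcA : K1.card = A.card := by rw [hK1card, hAcard]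
    have hcB : B.card = K1.card := by rw [hK1card, hBcard]
    have hAsub : A ⊆ In := hsupp ▸ mSupport_mono hsub1
    have hBsub : B ⊆ In := hsupp ▸ mSupport_mono hsub2
    have hdisjE : Disjoint M₁ M₂ := by
      rw [Finset.disjoint_left]
      intro e he1 he2
      have h1 : e ⊆ A := edge_subset_support he1
      have h2 : e ⊆ B := edge_subset_support he2
      have hecard : e.card = r := hm1.1 e he1
      have : e = ∅ := Finset.subset_empty.mp (by
        intro x hx
        exact absurd (Finset.disjoint_left.mp hd (h1 hx) (h2 hx)) (fun hh => hh))
      rw [this] at hecard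
      simp at hecard
      omega
    have hsubU : M₁ ∪ M₂ ⊆ M := Finset.union_subset hsub1 hsub2
    have hcardU : (M₁ ∪ M₂).card = 2 * k := by
      rw [Finset.card_union_of_disjoint hdisjE, hc1, hc2]; omega
    have hrestcard : rest.card = n - 2 * k := by
      rw [hrest, Finset.card_sdiff_of_subset hsubU, hcard, hcardU]
    have hdisj1r : Disjoint M₁ rest := by
      rw [Finset.disjoint_right]
      intro e he
      rw [hrest, Finset.mem_sdiff] at he
      exact fun h1 => he.2 (Finset.mem_union_left _ h1)
    have hdisj2r : Disjoint M₂ rest := by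
      rw [Finset.disjoint_right]
      intro e he
      rw [hrest, Finset.mem_sdiff] at he
      exact fun h1 => he.2 (Finset.mem_union_right _ h1)
    have hrestsupp : mSupport rest = V := by
      have hM : M = (M₁ ∪ M₂) ∪ rest := (Finset.union_sdiff_of_subset hsubU).symm
      have h1 : mSupport M = (A ∪ B) ∪ mSupport rest := by
        conv_lhs => rw [hM]
        rw [mSupport_union, mSupport_union]
      have h2 : Disjoint (A ∪ B) (mSupport rest) := by
        rw [Finset.disjoint_union_left]
        exact ⟨support_disjoint_sub hmatch hsub1 Finset.sdiff_subset hdisj1r,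
          support_disjoint_sub hmatch hsub2 Finset.sdiff_subset hdisj2r⟩
      rw [hV, ← hsupp, h1, Finset.union_sdiff_cancel_left h2]
    have hABdisj : Disjoint A B := hd
    have hABcard : (A ∪ B).card = 2 * (r * k) := by
      rw [Finset.card_union_of_disjoint hABdisj, hAcard, hBcard]; omega
    have hABsub : A ∪ B ⊆ In := Finset.union_subset hAsub hBsub
    have hVcard : V.card = r * (n - 2 * k) := by
      have h2 : r * (2 * k) = 2 * (r * k) := by ring
      rw [hV, Finset.card_sdiff_of_subset hABsub, hIncard, hABcard, Nat.mul_sub, h2]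
    have hcV : K2.card = V.card := by rw [hK2card, hVcard]
    -- membership
    have hmemT : Φ M ∈ T := by
      rw [hΦM, hT]
      rw [Finset.mem_product]
      constructor
      · rw [mem_MSet]
        exact ⟨mtrans_isMatching hcA rfl hm1, (mtrans_card hcA rfl).trans hc1,
          mtrans_support hcA rfl⟩
      rw [Finset.mem_product]
      constructor
      · rw [Finset.mem_powersetCard]; exact ⟨hAsub, hAcard⟩
      rw [Finset.mem_product]
      constructor
      · rw [Finset.mem_powersetCard]; exact ⟨hBsub, hBcard⟩
      · rw [mem_MSet]
        exact ⟨mtrans_isMatching hcV hrestsupp hmrest,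
          (mtrans_card hcV hrestsupp).trans hrestcard, mtrans_support hcV hrestsupp⟩
    refine ⟨hmemT, ?_⟩
    -- reconstruction
    rw [hΦM, hrecon]
    simp only
    have e1 : mtrans K1 A (mtrans A K1 M₁) = M₁ := mtrans_roundtrip hcA rfl
    have e2 : mtrans K1 B (mtrans A K1 M₁) = M₂ := by
      rw [mtrans_comp hcA hcB rfl]
      exact (matchIso_eq_mtrans hiso).symm
    have e3 : mtrans K2 V (mtrans V K2 rest) = rest := mtrans_roundtrip hcV hrestsupp
    rw [e1, e2, e3]
    exact (Finset.union_sdiff_of_subset hsubU).symm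
  have hinj : Set.InjOn Φ (Bad : Set (Finset (Finset ℕ))) := by
    intro M hM M' hM' heq
    rw [(key M hM).2, (key M' hM').2, heq]
  calc Bad.card ≤ T.card :=
      Finset.card_le_card_of_injOn Φ (fun M hM => (key M hM).1) hinj
    _ = NM r k * ((r * n).choose (r * k) * ((r * n).choose (r * k) * NM r (n - 2 * k))) := by
        rw [hT, Finset.card_product, Finset.card_product, Finset.card_product,
          Finset.card_powersetCard, hIncard, NM, NM, hK2]

lemma pow_self_le (m : ℕ) : m ^ m ≤ 3 ^ m * m.factorial := by
  have hx : (0:ℝ) ≤ (m:ℝ) := Nat.cast_nonneg m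
  have h := Real.sum_le_exp_of_nonneg hx (m + 1)
  have hterm : (m:ℝ) ^ m / m.factorial ≤ Real.exp m := by
    refine le_trans ?_ h
    exact Finset.single_le_sum (f := fun i => (m:ℝ) ^ i / i.factorial)
      (fun i _ => by positivity) (Finset.self_mem_range_succ m)
  have hfac : (0:ℝ) < (m.factorial : ℝ) := by exact_mod_cast m.factorial_pos
  rw [div_le_iff₀ hfac] at hterm
  have hexp : Real.exp m ≤ 3 ^ m := by
    have h1 : Real.exp (m : ℝ) = Real.exp 1 ^ m := by
      rw [← Real.exp_nat_mul]; norm_num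
    rw [h1]
    apply pow_le_pow_left₀ (Real.exp_pos 1).le
    exact le_trans Real.exp_one_lt_d9.le (by norm_num)
  have hfin : (m:ℝ) ^ m ≤ 3 ^ m * m.factorial :=
    hterm.trans (mul_le_mul_of_nonneg_right hexp hfac.le)
  exact_mod_cast hfin

lemma choose_mul_le {a b : ℕ} : a.choose b * b.factorial ≤ a ^ b := by
  rw [mul_comm, ← Nat.descFactorial_eq_factorial_mul_choose]
  exact Nat.descFactorial_le_pow a b

lemma pow_identity (F u v r k : ℕ) :
    F ^ (2 * k) * (u ^ ((r - 1) * k) * (3 ^ (r * k) * v ^ (r * k)) ^ 2)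
      = (F ^ 2 * (u ^ (r - 1) * (3 ^ (2 * r) * v ^ (2 * r)))) ^ k := by
  have e3 : r * k * 2 = 2 * r * k := by ring
  calc F ^ (2 * k) * (u ^ ((r - 1) * k) * (3 ^ (r * k) * v ^ (r * k)) ^ 2)
      = F ^ (2 * k) * (u ^ ((r - 1) * k) * (3 ^ (r * k * 2) * v ^ (r * k * 2))) := by
        rw [mul_pow, ← pow_mul, ← pow_mul]
    _ = (F ^ 2) ^ k * ((u ^ (r - 1)) ^ k * ((3 ^ (2 * r)) ^ k * (v ^ (2 * r)) ^ k)) := by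
        rw [pow_mul F 2 k, pow_mul u (r - 1) k, e3, pow_mul 3 (2 * r) k, pow_mul v (2 * r) k]
    _ = (F ^ 2 * (u ^ (r - 1) * (3 ^ (2 * r) * v ^ (2 * r)))) ^ k := by
        rw [mul_pow, mul_pow, mul_pow]

lemma pow_identity2 (c u r k : ℕ) :
    (c ^ (2 * (r - 1)) * (u ^ r) ^ 2) ^ k = c ^ ((r - 1) * (2 * k)) * (u ^ (r * k)) ^ 2 := by
  have e1 : 2 * (r - 1) * k = (r - 1) * (2 * k) := by ring
  have e2 : r * (2 * k) = r * k * 2 := by ring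
  rw [mul_pow, ← pow_mul, ← pow_mul, ← pow_mul, e1, e2, pow_mul u (r * k) 2]

/-- Final numeric comparison, all in ℕ. -/
lemma numeric_main {r n k : ℕ} (hr : 2 ≤ r) (hk : 1 ≤ k) (h4 : 4 * k ≤ n)
    (hbig : 36 ^ r * r ^ (2 * r) * n ^ 2 < k ^ (r + 1)) :
    NM r k * ((r * n).choose (r * k) * ((r * n).choose (r * k) * NM r (n - 2 * k)))
      < NM r n := by
  have hr1 : 1 ≤ r := by omega
  have hn1 : 1 ≤ n := by omega
  set s := n - 2 * k with hs
  set C := (r * n).choose (r * k) with hC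
  set F := (r - 1).factorial with hF
  set a := r * k with ha
  set b := r * n with hb
  set c := r * s + 1 with hc
  have hapos : 0 < a := by positivity
  have hbpos : 0 < b := by positivity
  have hcpos : 0 < c := by positivity
  have hFpos : 0 < F := Nat.factorial_pos _
  -- base inequality
  have hbase : F ^ 2 * (a ^ (r - 1) * (3 ^ (2 * r) * b ^ (2 * r)))
      < c ^ (2 * (r - 1)) * (a ^ r) ^ 2 := by
    have hF_le : F ≤ r ^ (r - 1) := by
      rw [hF]
      calc (r - 1).factorial ≤ (r - 1) ^ (r - 1) := Nat.factorial_le_pow _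
        _ ≤ r ^ (r - 1) := Nat.pow_le_pow_left (by omega) _
    have hF2 : F ^ 2 ≤ r ^ (2 * (r - 1)) := by
      calc F ^ 2 ≤ (r ^ (r - 1)) ^ 2 := Nat.pow_le_pow_left hF_le 2
        _ = r ^ (2 * (r - 1)) := by rw [← pow_mul]; congr 1; ring
    have hb2c : b ≤ 2 * c := by
      have hn2s : n ≤ 2 * s := by omega
      have hrs : s ≤ r * s := Nat.le_mul_of_pos_left s (by omega)
      calc b = r * n := hb
        _ ≤ r * (2 * s) := Nat.mul_le_mul_left r hn2s
        _ = 2 * (r * s) := by ring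
        _ ≤ 2 * c := by omega
    have hcore : 2 ^ (2 * (r - 1)) * r ^ (2 * (r - 1)) * 3 ^ (2 * r) * b ^ 2
        < a ^ (r + 1) := by
      have e1 : 2 ^ (2 * (r - 1)) * 3 ^ (2 * r) ≤ 36 ^ r := by
        calc 2 ^ (2 * (r - 1)) * 3 ^ (2 * r) ≤ 2 ^ (2 * r) * 3 ^ (2 * r) :=
            Nat.mul_le_mul_right _ (Nat.pow_le_pow_right (by omega) (by omega))
          _ = 36 ^ r := by
            rw [← Nat.mul_pow]
            norm_num
            rw [pow_mul]
            norm_num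
      have e2 : r ^ (2 * (r - 1)) * b ^ 2 = r ^ (2 * r) * n ^ 2 := by
        rw [hb, Nat.mul_pow, ← mul_assoc, ← pow_add]
        congr 2
        omega
      calc 2 ^ (2 * (r - 1)) * r ^ (2 * (r - 1)) * 3 ^ (2 * r) * b ^ 2
          = (2 ^ (2 * (r - 1)) * 3 ^ (2 * r)) * (r ^ (2 * (r - 1)) * b ^ 2) := by ring
        _ ≤ 36 ^ r * (r ^ (2 * r) * n ^ 2) := by
            rw [e2]
            exact Nat.mul_le_mul_right _ e1
        _ = 36 ^ r * r ^ (2 * r) * n ^ 2 := by ring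
        _ < k ^ (r + 1) := hbig
        _ ≤ r ^ (r + 1) * k ^ (r + 1) := Nat.le_mul_of_pos_left _ (by positivity)
        _ = a ^ (r + 1) := by rw [ha, Nat.mul_pow]
    have key : 2 ^ (2 * (r - 1)) *
        (r ^ (2 * (r - 1)) * (a ^ (r - 1) * (3 ^ (2 * r) * b ^ (2 * r))))
        < 2 ^ (2 * (r - 1)) * (c ^ (2 * (r - 1)) * (a ^ r) ^ 2) := by
      have hsplit1 : b ^ (2 * r) = b ^ (2 * (r - 1)) * b ^ 2 := by
        rw [← pow_add]; congr 1; omega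
      have hsplit2 : a ^ (r - 1) * a ^ (r + 1) = (a ^ r) ^ 2 := by
        rw [← pow_add, ← pow_mul]; congr 1; omega
      calc 2 ^ (2 * (r - 1)) *
            (r ^ (2 * (r - 1)) * (a ^ (r - 1) * (3 ^ (2 * r) * b ^ (2 * r))))
          = b ^ (2 * (r - 1)) * (a ^ (r - 1) *
              (2 ^ (2 * (r - 1)) * r ^ (2 * (r - 1)) * 3 ^ (2 * r) * b ^ 2)) := by
            rw [hsplit1]; ring
        _ < b ^ (2 * (r - 1)) * (a ^ (r - 1) * a ^ (r + 1)) := by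
            exact (Nat.mul_lt_mul_left (by positivity)).mpr
              ((Nat.mul_lt_mul_left (by positivity)).mpr hcore)
        _ = b ^ (2 * (r - 1)) * (a ^ r) ^ 2 := by rw [hsplit2]
        _ ≤ (2 * c) ^ (2 * (r - 1)) * (a ^ r) ^ 2 :=
            Nat.mul_le_mul_right _ (Nat.pow_le_pow_left hb2c _)
        _ = 2 ^ (2 * (r - 1)) * (c ^ (2 * (r - 1)) * (a ^ r) ^ 2) := by
            rw [Nat.mul_pow]; ring
    have hmono : 2 ^ (2 * (r - 1)) * (F ^ 2 * (a ^ (r - 1) * (3 ^ (2 * r) * b ^ (2 * r))))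
        ≤ 2 ^ (2 * (r - 1)) *
          (r ^ (2 * (r - 1)) * (a ^ (r - 1) * (3 ^ (2 * r) * b ^ (2 * r)))) := by
      apply Nat.mul_le_mul_left
      exact Nat.mul_le_mul_right _ hF2
    have := lt_of_le_of_lt hmono key
    exact Nat.lt_of_mul_lt_mul_left this
  -- bounds on the factors
  have hNMk : NM r k ≤ a ^ ((r - 1) * k) := NM_le_pow hr1 k le_rfl
  have hCC : C * a ^ a ≤ 3 ^ a * b ^ a := by
    calc C * a ^ a ≤ C * (3 ^ a * a.factorial) := Nat.mul_le_mul_left _ (pow_self_le a)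
      _ = 3 ^ a * (C * a.factorial) := by ring
      _ ≤ 3 ^ a * b ^ a := Nat.mul_le_mul_left _ choose_mul_le
  have hsn : s + 2 * k = n := by omega
  have hratio : c ^ ((r - 1) * (2 * k)) * NM r s ≤ F ^ (2 * k) * NM r n := by
    have := NM_ratio hr1 s (2 * k)
    rwa [hsn] at this
  have hNMs : 0 < NM r s := NM_pos hr1
  have hCC' : C * a ^ (r * k) ≤ 3 ^ (r * k) * b ^ (r * k) := hCC
  -- the key middle inequality
  have hstar : F ^ (2 * k) * NM r k * (C * a ^ (r * k)) ^ 2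
      < c ^ ((r - 1) * (2 * k)) * (a ^ (r * k)) ^ 2 := by
    calc F ^ (2 * k) * NM r k * (C * a ^ (r * k)) ^ 2
        ≤ F ^ (2 * k) * a ^ ((r - 1) * k) * (C * a ^ (r * k)) ^ 2 :=
          Nat.mul_le_mul_right _ (Nat.mul_le_mul_left _ hNMk)
      _ ≤ F ^ (2 * k) * a ^ ((r - 1) * k) * (3 ^ (r * k) * b ^ (r * k)) ^ 2 :=
          Nat.mul_le_mul_left _ (Nat.pow_le_pow_left hCC' 2)
      _ = (F ^ 2 * (a ^ (r - 1) * (3 ^ (2 * r) * b ^ (2 * r)))) ^ k := by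
          rw [mul_assoc]
          exact pow_identity F a b r k
      _ < (c ^ (2 * (r - 1)) * (a ^ r) ^ 2) ^ k :=
          Nat.pow_lt_pow_left hbase (by omega)
      _ = c ^ ((r - 1) * (2 * k)) * (a ^ (r * k)) ^ 2 := pow_identity2 c a r k
  -- putting it together
  have main2 : (NM r k * (C * (C * NM r s))) * (F ^ (2 * k) * (a ^ (r * k)) ^ 2)
      < NM r n * (F ^ (2 * k) * (a ^ (r * k)) ^ 2) := by
    calc (NM r k * (C * (C * NM r s))) * (F ^ (2 * k) * (a ^ (r * k)) ^ 2)
        = (F ^ (2 * k) * NM r k * (C * a ^ (r * k)) ^ 2) * NM r s := by ring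
      _ < (c ^ ((r - 1) * (2 * k)) * (a ^ (r * k)) ^ 2) * NM r s :=
          (Nat.mul_lt_mul_right hNMs).mpr hstar
      _ = (c ^ ((r - 1) * (2 * k)) * NM r s) * (a ^ (r * k)) ^ 2 := by ring
      _ ≤ (F ^ (2 * k) * NM r n) * (a ^ (r * k)) ^ 2 := Nat.mul_le_mul_right _ hratio
      _ = NM r n * (F ^ (2 * k) * (a ^ (r * k)) ^ 2) := by ring
  exact Nat.lt_of_mul_lt_mul_right main2

open scoped Classical in
lemma exists_good {r n k : ℕ} (hr : 2 ≤ r) (hk : 1 ≤ k) (h4 : 4 * k ≤ n)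
    (hbig : 36 ^ r * r ^ (2 * r) * n ^ 2 < k ^ (r + 1)) :
    minTwins r n ≤ k - 1 := by
  have hr1 : 1 ≤ r := by omega
  have h2k : 2 * k ≤ n := by omega
  have hn1 : 1 ≤ n := by omega
  have hlt : ((MSet r (Finset.Icc 1 (r * n)) n).filter (fun M => HasTwins M k)).card
      < (MSet r (Finset.Icc 1 (r * n)) n).card :=
    lt_of_le_of_lt (card_bad_le hr1 h2k) (numeric_main hr hk h4 hbig)
  have hex : ∃ M ∈ MSet r (Finset.Icc 1 (r * n)) n, ¬ HasTwins M k := by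
    by_contra hcon
    push_neg at hcon
    have heq : (MSet r (Finset.Icc 1 (r * n)) n).filter (fun M => HasTwins M k)
        = MSet r (Finset.Icc 1 (r * n)) n := Finset.filter_true_of_mem hcon
    rw [heq] at hlt
    exact lt_irrefl _ hlt
  obtain ⟨M, hM, hnot⟩ := hex
  calc minTwins r n ≤ twinMax M := minTwins_le (isOrderedMatching_iff.mpr hM)
    _ ≤ k - 1 := twinMax_le_of_not hk hnot

lemma minTwins_le_n {r n : ℕ} (hr : 1 ≤ r) : minTwins r n ≤ n := by
  have hmem := blockM_mem (r := r) (m := n) hr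
  calc minTwins r n ≤ twinMax (blockM r n) := minTwins_le (isOrderedMatching_iff.mpr hmem)
    _ ≤ (blockM r n).card := twinMax_le_card _
    _ = n := (mem_MSet.mp hmem).2.1

end Aux

set_option maxHeartbeats 1000000 in
/-- For every fixed `r ≥ 2` there is `C = C(r) > 0` such that for all `n ≥ 1`,
`t^(r)(n) ≤ C · n^{2/(r+1)}`. -/
theorem deterministic_upper_bound :
    ∀ r : ℕ, 2 ≤ r → ∃ C : ℝ, 0 < C ∧ ∀ n : ℕ, 1 ≤ n →
      (minTwins r n : ℝ) ≤ C * (n : ℝ) ^ ((2 : ℝ) / ((r : ℝ) + 1)) := by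
  intro r hr
  have hr1 : 1 ≤ r := by omega
  have hrpos : (0:ℝ) < (r:ℝ) := by
    have : (0:ℕ) < r := by omega
    exact_mod_cast this
  refine ⟨148 * (r:ℝ)^2, by positivity, ?_⟩
  intro n hn
  have hnpos : (0:ℝ) < (n:ℝ) := by
    have : (0:ℕ) < n := by omega
    exact_mod_cast this
  have hnR1 : (1:ℝ) ≤ (n:ℝ) := by exact_mod_cast hn
  set X : ℝ := (n : ℝ) ^ ((2 : ℝ) / ((r : ℝ) + 1)) with hX
  have hexp_pos : (0:ℝ) < (2 : ℝ) / ((r : ℝ) + 1) := by positivity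
  have hX1 : (1:ℝ) ≤ X := Real.one_le_rpow hnR1 hexp_pos.le
  have hXpos : (0:ℝ) < X := lt_of_lt_of_le one_pos hX1
  set z : ℝ := 36 * (r:ℝ)^2 * X with hz
  have hzpos : (0:ℝ) < z := by positivity
  set k : ℕ := ⌈z⌉₊ with hk
  have hk1 : 1 ≤ k := Nat.ceil_pos.mpr hzpos
  have hkz : z ≤ (k:ℝ) := Nat.le_ceil z
  have hkz2 : (k:ℝ) ≤ z + 1 := (Nat.ceil_lt_add_one hzpos.le).le
  -- X^(r+1) = n^2
  have hXpow : X ^ (r + 1) = (n:ℝ) ^ 2 := by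
    rw [hX, ← Real.rpow_natCast ((n:ℝ) ^ ((2 : ℝ) / ((r : ℝ) + 1))) (r + 1),
      ← Real.rpow_mul hnpos.le]
    have hne : (r:ℝ) + 1 ≠ 0 := by positivity
    have : (2 : ℝ) / ((r : ℝ) + 1) * ((r:ℕ) + 1 : ℕ) = 2 := by
      push_cast
      field_simp
    rw [this]
    rw [show ((2:ℝ) = ((2:ℕ):ℝ)) by norm_num, Real.rpow_natCast]
  have hbig : 36 ^ r * r ^ (2 * r) * n ^ 2 < k ^ (r + 1) := by
    have hreal : ((36 ^ r * r ^ (2 * r) * n ^ 2 : ℕ) : ℝ) < ((k ^ (r + 1) : ℕ) : ℝ) := by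
      push_cast
      have h1 : z ^ (r + 1) ≤ (k:ℝ) ^ (r + 1) := pow_le_pow_left₀ hzpos.le hkz _
      have h2 : (36:ℝ) ^ r * (r:ℝ) ^ (2 * r) * (n:ℝ) ^ 2 < z ^ (r + 1) := by
        have hzpow : z ^ (r + 1) = 36 ^ (r + 1) * ((r:ℝ)^2) ^ (r + 1) * (n:ℝ) ^ 2 := by
          rw [hz, mul_pow, mul_pow, hXpow]
        rw [hzpow]
        have e1 : ((r:ℝ)^2) ^ (r + 1) = (r:ℝ) ^ (2 * (r + 1)) := by
          rw [← pow_mul]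
        rw [e1]
        have hlt : (36:ℝ) ^ r * (r:ℝ) ^ (2 * r) < 36 ^ (r + 1) * (r:ℝ) ^ (2 * (r + 1)) := by
          have e2 : (36:ℝ) ^ (r + 1) * (r:ℝ) ^ (2 * (r + 1))
              = 36 * ((36:ℝ) ^ r * (r:ℝ) ^ (2 * r)) * (r:ℝ) ^ 2 := by
            rw [pow_succ]
            have e3 : 2 * (r + 1) = 2 * r + 2 := by ring
            rw [e3, pow_add]
            ring
          rw [e2]
          have hW : (0:ℝ) < (36:ℝ) ^ r * (r:ℝ) ^ (2 * r) := by positivity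
          have hr2 : (1:ℝ) ≤ (r:ℝ) ^ 2 := by
            have : (1:ℝ) ≤ (r:ℝ) := by exact_mod_cast hr1
            nlinarith
          nlinarith
        have hn2 : (0:ℝ) < (n:ℝ) ^ 2 := by positivity
        exact mul_lt_mul_of_pos_right hlt hn2
      exact lt_of_lt_of_le h2 h1
    exact_mod_cast hreal
  have hfinal : (minTwins r n : ℝ) ≤ 148 * (r:ℝ)^2 * X := by
    rcases le_or_gt (4 * k) n with h4 | h4
    · -- good case
      have hle : minTwins r n ≤ k - 1 := exists_good hr hk1 h4 hbig
      have h1 : (minTwins r n : ℝ) ≤ (k:ℝ) := by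
        have : minTwins r n ≤ k := le_trans hle (by omega)
        exact_mod_cast this
      have hr2X : (1:ℝ) ≤ (r:ℝ)^2 * X := by
        have hrr : (1:ℝ) ≤ (r:ℝ)^2 := by
          have : (1:ℝ) ≤ (r:ℝ) := by exact_mod_cast hr1
          nlinarith
        nlinarith
      calc (minTwins r n : ℝ) ≤ (k:ℝ) := h1
        _ ≤ z + 1 := hkz2
        _ = 36 * (r:ℝ)^2 * X + 1 := by rw [hz]
        _ ≤ 36 * (r:ℝ)^2 * X + (r:ℝ)^2 * X := by linarith
        _ ≤ 148 * (r:ℝ)^2 * X := by nlinarith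
    · -- small n case
      have hle : minTwins r n ≤ n := minTwins_le_n hr1
      have h1 : (minTwins r n : ℝ) ≤ (n:ℝ) := by exact_mod_cast hle
      have h2 : (n:ℝ) < 4 * (k:ℝ) := by
        have : n < 4 * k := h4
        exact_mod_cast this
      calc (minTwins r n : ℝ) ≤ (n:ℝ) := h1
        _ ≤ 4 * (k:ℝ) := h2.le
        _ ≤ 4 * (z + 1) := by linarith
        _ = 144 * (r:ℝ)^2 * X + 4 := by rw [hz]; ring
        _ ≤ 148 * (r:ℝ)^2 * X := by
            have hrr : (1:ℝ) ≤ (r:ℝ)^2 := by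
              have : (1:ℝ) ≤ (r:ℝ) := by exact_mod_cast hr1
              nlinarith
            nlinarith
  exact hfinal
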